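/- Let A be an n×n transition matrix (viewed as the adjacency matrix of a finite directed graph on vertices {1,...,n}). If A is transitive (for any two vertices i,j there is a directed path from i to j) and A is not a permutation matrix, then A satisfies condition (I): for every vertex i there is a directed path starting at i and ending at some vertex j which lies on two distinct first-return cycles (i.e., there exist two distinct admissible words of length ≥ 2 starting and ending at j whose interior letters differ from j). -/
import Mathlib


/-- `w 0, w 1, ..., w (r-1)` is an admissible word for the transition matrix `A`. -/
def AdmissibleWord {n : ℕ} (A : Fin n → Fin n → Bool) (r : ℕ) (w : ℕ → Fin n) : Prop :=
  ∀ k, k + 1 < r → A (w k) (w (k + 1)) = true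

/-- A first-return word at `i`: an admissible word of length at least `2` starting and
ending at `i`, with no interior letter equal to `i`. -/
def FirstReturnWord {n : ℕ} (A : Fin n → Fin n → Bool) (i : Fin n) (r : ℕ) (w : ℕ → Fin n) : Prop :=
  2 ≤ r ∧ AdmissibleWord A r w ∧ w 0 = i ∧ w (r - 1) = i ∧ ∀ k, 0 < k → k < r - 1 → w k ≠ i

/-- `i` lies in the set `𝒮`: there exist two distinct first-return words at `i`. -/
def MemS {n : ℕ} (A : Fin n → Fin n → Bool) (i : Fin n) : Prop :=
  ∃ (r s : ℕ) (w v : ℕ → Fin n), FirstReturnWord A i r w ∧ FirstReturnWord A i s v ∧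
    (r ≠ s ∨ ∃ k, k < r ∧ w k ≠ v k)

/-- Condition (I): from every vertex there is an admissible word ending in `𝒮`. -/
def ConditionI {n : ℕ} (A : Fin n → Fin n → Bool) : Prop :=
  ∀ i : Fin n, ∃ (r : ℕ) (w : ℕ → Fin n),
    1 ≤ r ∧ AdmissibleWord A r w ∧ w 0 = i ∧ MemS A (w (r - 1))

lemma adm_mono {n : ℕ} {A : Fin n → Fin n → Bool} {r s : ℕ} {w : ℕ → Fin n}
    (h : AdmissibleWord A r w) (hs : s ≤ r) : AdmissibleWord A s w :=
  fun k hk => h k (lt_of_lt_of_le hk hs)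

/-- Truncate a cycle at `i` to its first return, keeping the same function. -/
lemma prefix_first_return {n : ℕ} {A : Fin n → Fin n → Bool} {i : Fin n} {r : ℕ} {w : ℕ → Fin n}
    (hr : 2 ≤ r) (hadm : AdmissibleWord A r w) (h0 : w 0 = i) (hl : w (r - 1) = i) :
    ∃ s, 2 ≤ s ∧ s ≤ r ∧ FirstReturnWord A i s w := by
  classical
  have hP : ∃ k, 1 ≤ k ∧ w k = i := ⟨r - 1, by omega, hl⟩
  set m := Nat.find hP with hm
  have hspec := Nat.find_spec hP
  have hmle : m ≤ r - 1 := Nat.find_le ⟨by omega, hl⟩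
  have hm1 : 1 ≤ m := hspec.1
  refine ⟨m + 1, by omega, by omega, by omega, adm_mono hadm (by omega), h0, ?_, ?_⟩
  · simpa using hspec.2
  · intro k hk1 hk2
    intro hwk
    exact Nat.find_min hP (by omega : k < m) ⟨by omega, hwk⟩

/-- Truncate a cycle at `i` to its last return (a suffix first-return word). -/
lemma suffix_first_return {n : ℕ} {A : Fin n → Fin n → Bool} {i : Fin n} {r : ℕ} {w : ℕ → Fin n}
    (hr : 2 ≤ r) (hadm : AdmissibleWord A r w) (h0 : w 0 = i) (hl : w (r - 1) = i) :
    ∃ m, m ≤ r - 2 ∧ FirstReturnWord A i (r - m) (fun k => w (m + k)) := by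
  classical
  set m := Nat.findGreatest (fun k => w k = i) (r - 2) with hm
  have hmle : m ≤ r - 2 := Nat.findGreatest_le _
  have hspec : w m = i := by
    have := Nat.findGreatest_spec (P := fun k => w k = i) (m := 0) (Nat.zero_le (r - 2)) h0
    simpa [← hm] using this
  refine ⟨m, hmle, by omega, ?_, by simpa using hspec, ?_, ?_⟩
  · intro k hk
    have := hadm (m + k) (by omega)
    simpa [Nat.add_assoc] using this
  · show w (m + (r - m - 1)) = i
    rw [show m + (r - m - 1) = r - 1 from by omega]
    exact hl
  · intro k hk0 hk1
    show w (m + k) ≠ i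
    exact Nat.findGreatest_is_greatest (by omega : m < m + k) (by omega : m + k ≤ r - 2)

lemma prepend_adm {n : ℕ} {A : Fin n → Fin n → Bool} {r : ℕ} {w : ℕ → Fin n} {i : Fin n}
    (hadm : AdmissibleWord A r w) (he : A i (w 0) = true) :
    AdmissibleWord A (r + 1) (fun k => if k = 0 then i else w (k - 1)) := by
  intro k hk
  rcases Nat.eq_zero_or_pos k with h0 | h0
  · subst h0; simpa using he
  · have hk0 : k ≠ 0 := by omega
    simp only [if_neg hk0, if_neg (Nat.succ_ne_zero k)]
    have := hadm (k - 1) (by omega)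
    rwa [show k - 1 + 1 = k from by omega] at this

lemma append_adm {n : ℕ} {A : Fin n → Fin n → Bool} {r : ℕ} {w : ℕ → Fin n} {j : Fin n}
    (hr : 1 ≤ r) (hadm : AdmissibleWord A r w) (he : A (w (r - 1)) j = true) :
    AdmissibleWord A (r + 1) (fun k => if k = r then j else w k) := by
  intro k hk
  have hkr : k ≠ r := by omega
  by_cases h1 : k + 1 = r
  · simp only [if_neg hkr, if_pos h1]
    rwa [show k = r - 1 from by omega]
  · have h2 : k + 1 ≠ r := h1
    simp only [if_neg hkr, if_neg h2]
    exact hadm k (by omega)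

/-- If `A` is transitive and not a permutation matrix, then `A` satisfies condition (I). -/
theorem transitive_not_permutation_implies_conditionI
    {n : ℕ} (A : Fin n → Fin n → Bool)
    (htrans : ∀ i j : Fin n, ∃ (r : ℕ) (w : ℕ → Fin n),
        2 ≤ r ∧ AdmissibleWord A r w ∧ w 0 = i ∧ w (r - 1) = j)
    (hperm : ¬ ((∀ i : Fin n, ∃! j : Fin n, A i j = true) ∧
                (∀ j : Fin n, ∃! i : Fin n, A i j = true))) :
    ConditionI A := by
  classical
  suffices h : ∃ j, MemS A j by
    obtain ⟨j, hj⟩ := h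
    intro i0
    obtain ⟨r, w, hr, hadm, hw0, hwr⟩ := htrans i0 j
    exact ⟨r, w, by omega, hadm, hw0, hwr ▸ hj⟩
  by_cases hrow : ∀ i : Fin n, ∃! j : Fin n, A i j = true
  · -- column case: some column has two ones
    have hcol : ¬ ∀ j : Fin n, ∃! i : Fin n, A i j = true := fun h => hperm ⟨hrow, h⟩
    push_neg at hcol
    obtain ⟨j, hj⟩ := hcol
    obtain ⟨r0, w0, hr0, hadm0, hw00, hw0l⟩ := htrans j j
    have ha : A (w0 (r0 - 2)) j = true := by
      have := hadm0 (r0 - 2) (by omega)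
      rwa [show r0 - 2 + 1 = r0 - 1 from by omega, hw0l] at this
    set a := w0 (r0 - 2) with hadef
    obtain ⟨b, hb, hba⟩ : ∃ b, A b j = true ∧ b ≠ a := by
      by_contra hc; push_neg at hc
      exact hj ⟨a, ha, fun y hy => hc y hy⟩
    obtain ⟨r1, w1, hr1, hadm1, hw10, hw1l⟩ := htrans j a
    obtain ⟨r2, w2, hr2, hadm2, hw20, hw2l⟩ := htrans j b
    -- append j to both paths to get cycles at j
    set u1 : ℕ → Fin n := fun k => if k = r1 then j else w1 k with hu1
    set u2 : ℕ → Fin n := fun k => if k = r2 then j else w2 k with hu2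
    have hadmu1 : AdmissibleWord A (r1 + 1) u1 :=
      append_adm (by omega) hadm1 (by rwa [hw1l])
    have hadmu2 : AdmissibleWord A (r2 + 1) u2 :=
      append_adm (by omega) hadm2 (by rwa [hw2l])
    have hu10 : u1 0 = j := by simp [hu1, show (0:ℕ) ≠ r1 from by omega, hw10]
    have hu20 : u2 0 = j := by simp [hu2, show (0:ℕ) ≠ r2 from by omega, hw20]
    have hu1l : u1 (r1 + 1 - 1) = j := by simp [hu1]
    have hu2l : u2 (r2 + 1 - 1) = j := by simp [hu2]
    obtain ⟨m1, hm1, hf1⟩ := suffix_first_return (by omega) hadmu1 hu10 hu1l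
    obtain ⟨m2, hm2, hf2⟩ := suffix_first_return (by omega) hadmu2 hu20 hu2l
    -- values at second-to-last position
    have hv1 : u1 (m1 + (r1 + 1 - m1 - 2)) = a := by
      rw [show m1 + (r1 + 1 - m1 - 2) = r1 - 1 from by omega]
      simp [hu1, show r1 - 1 ≠ r1 from by omega, hw1l]
    have hv2 : u2 (m2 + (r2 + 1 - m2 - 2)) = b := by
      rw [show m2 + (r2 + 1 - m2 - 2) = r2 - 1 from by omega]
      simp [hu2, show r2 - 1 ≠ r2 from by omega, hw2l]
    refine ⟨j, r1 + 1 - m1, r2 + 1 - m2, _, _, hf1, hf2, ?_⟩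
    by_cases hs : r1 + 1 - m1 = r2 + 1 - m2
    · refine Or.inr ⟨r1 + 1 - m1 - 2, by omega, ?_⟩
      show u1 (m1 + (r1 + 1 - m1 - 2)) ≠ u2 (m2 + (r1 + 1 - m1 - 2))
      rw [hv1, show r1 + 1 - m1 - 2 = r2 + 1 - m2 - 2 from by omega, hv2]
      exact fun h => hba h.symm
    · exact Or.inl hs
  · -- row case: some row has two ones
    push_neg at hrow
    obtain ⟨i, hi⟩ := hrow
    obtain ⟨r0, w0, hr0, hadm0, hw00, hw0l⟩ := htrans i i
    have ha : A i (w0 1) = true := by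
      have := hadm0 0 (by omega)
      rwa [hw00] at this
    set a := w0 1 with hadef
    obtain ⟨b, hb, hba⟩ : ∃ b, A i b = true ∧ b ≠ a := by
      by_contra hc; push_neg at hc
      exact hi ⟨a, ha, fun y hy => hc y hy⟩
    obtain ⟨r1, w1, hr1, hadm1, hw10, hw1l⟩ := htrans a i
    obtain ⟨r2, w2, hr2, hadm2, hw20, hw2l⟩ := htrans b i
    set u1 : ℕ → Fin n := fun k => if k = 0 then i else w1 (k - 1) with hu1
    set u2 : ℕ → Fin n := fun k => if k = 0 then i else w2 (k - 1) with hu2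
    have hadmu1 : AdmissibleWord A (r1 + 1) u1 :=
      prepend_adm hadm1 (by rwa [hw10])
    have hadmu2 : AdmissibleWord A (r2 + 1) u2 :=
      prepend_adm hadm2 (by rwa [hw20])
    have hu10 : u1 0 = i := by simp [hu1]
    have hu20 : u2 0 = i := by simp [hu2]
    have hu1l : u1 (r1 + 1 - 1) = i := by
      simp only [hu1, Nat.add_sub_cancel, if_neg (show r1 ≠ 0 from by omega)]
      exact hw1l
    have hu2l : u2 (r2 + 1 - 1) = i := by
      simp only [hu2, Nat.add_sub_cancel, if_neg (show r2 ≠ 0 from by omega)]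
      exact hw2l
    obtain ⟨s1, hs1, hs1le, hf1⟩ := prefix_first_return (by omega) hadmu1 hu10 hu1l
    obtain ⟨s2, hs2, hs2le, hf2⟩ := prefix_first_return (by omega) hadmu2 hu20 hu2l
    refine ⟨i, s1, s2, u1, u2, hf1, hf2, Or.inr ⟨1, by omega, ?_⟩⟩
    have h1 : u1 1 = a := by simp [hu1, hw10]
    have h2 : u2 1 = b := by simp [hu2, hw20]
    rw [h1, h2]
    exact fun h => hba h.symm
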